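/- arXiv:1709.02490 — 4 statements merged into one kernel-verified Lean document; each statement's English description precedes it below -/
import Mathlib

section
/- Consider the Mirror Prox update: given v_t ∈ Z and vectors η_t, ξ_t, define z_t = argmin_{z ∈ Z}{γ_t⟨η_t, z⟩ + V_{v_t}(z)} and v_{t+1} = argmin_{z ∈ Z}{γ_t⟨ξ_t, z⟩ + V_{v_t}(z)}. Then for every z ∈ Z, γ_t⟨ξ_t, z_t - z⟩ ≤ V_{v_t}(z) - V_{v_{t+1}}(z) + (1/2)(γ_t²‖ξ_t - η_t‖²_* - ‖z_t - v_t‖²). -/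
open scoped RealInnerProductSpace

/-- First-order optimality condition for minimizing `z ↦ γ⟪c,z⟫ + ω z - ω v - ⟪gv, z - v⟫`
over a convex set. -/
lemma mp_opt_cond {E : Type*} [NormedAddCommGroup E] [InnerProductSpace ℝ E]
    [CompleteSpace E] {Z : Set E} (hZ : Convex ℝ Z) {ω : E → ℝ} {c v x y gx gv : E}
    (hgx : HasGradientAt ω gx x) (γ : ℝ)
    (hmin : IsMinOn (fun z => γ * ⟪c, z⟫ + (ω z - ω v - ⟪gv, z - v⟫)) Z x)
    (hx : x ∈ Z) (hy : y ∈ Z) :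
    0 ≤ γ * ⟪c, y - x⟫ + ⟪gx - gv, y - x⟫ := by
  have hcone : y - x ∈ posTangentConeAt Z x :=
    sub_mem_posTangentConeAt_of_segment_subset (hZ.segment_subset hx hy)
  have h1 : HasFDerivAt (fun z : E => ⟪c, z⟫) (innerSL ℝ c) x :=
    (innerSL ℝ c).hasFDerivAt
  have h2 : HasFDerivAt ω (InnerProductSpace.toDual ℝ E gx : E →L[ℝ] ℝ) x :=
    hgx.hasFDerivAt
  have h3 : HasFDerivAt (fun z : E => ⟪gv, z - v⟫) (innerSL ℝ gv) x := by
    have : HasFDerivAt (fun z : E => ⟪gv, z⟫ - ⟪gv, v⟫) (innerSL ℝ gv) x :=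
      (innerSL ℝ gv).hasFDerivAt.sub_const _
    simpa [inner_sub_right] using this
  have hF : HasFDerivAt (fun z => γ * ⟪c, z⟫ + (ω z - ω v - ⟪gv, z - v⟫))
      (γ • (innerSL ℝ c) + ((InnerProductSpace.toDual ℝ E gx : E →L[ℝ] ℝ)
        - 0 - innerSL ℝ gv)) x := by
    exact (h1.const_mul γ).add ((h2.sub (hasFDerivAt_const (ω v) x)).sub h3)
  have := hmin.localize.hasFDerivWithinAt_nonneg hF.hasFDerivWithinAt hcone
  simpa [inner_sub_left, mul_comm] using this

/-- Bregman distance lower bound from strong monotonicity of the gradient. -/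
lemma mp_bregman_lb {E : Type*} [NormedAddCommGroup E] [InnerProductSpace ℝ E]
    [CompleteSpace E] {Z : Set E} (hZ : Convex ℝ Z) (nrm : E → ℝ)
    (hh : ∀ (c : ℝ) (a : E), nrm (c • a) = |c| * nrm a)
    {ω : E → ℝ} {gradω : E → E}
    (hdiff : ∀ z ∈ Z, HasGradientAt ω (gradω z) z)
    (hstrong : ∀ z' ∈ Z, ∀ z'' ∈ Z, ⟪gradω z' - gradω z'', z' - z''⟫ ≥ (nrm (z' - z'')) ^ 2)
    {v z : E} (hv : v ∈ Z) (hz : z ∈ Z) :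
    (nrm (z - v)) ^ 2 / 2 ≤ ω z - ω v - ⟪gradω v, z - v⟫ := by
  set w := z - v with hw
  set C := (nrm w) ^ 2 with hC
  set g : ℝ → ℝ := fun t => ω (v + t • w) - t * ⟪gradω v, w⟫ - t ^ 2 / 2 * C with hg
  have hmem : ∀ t ∈ Set.Icc (0:ℝ) 1, v + t • w ∈ Z := by
    intro t ht
    have : v + t • w = (1 - t) • v + t • z := by
      rw [hw]; module
    rw [this]
    exact hZ hv hz (by linarith [ht.2]) ht.1 (by ring)
  have hderiv : ∀ t ∈ Set.Icc (0:ℝ) 1, HasDerivAt g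
      (⟪gradω (v + t • w), w⟫ - ⟪gradω v, w⟫ - t * C) t := by
    intro t ht
    have hpath : HasDerivAt (fun t : ℝ => v + t • w) w t := by
      simpa using ((hasDerivAt_id t).smul_const w).const_add v
    have h1 : HasDerivAt (fun t : ℝ => ω (v + t • w)) ⟪gradω (v + t • w), w⟫ t := by
      have := ((hdiff _ (hmem t ht)).hasFDerivAt.comp_hasDerivAt t hpath)
      simp at this
      exact this
    have h2 : HasDerivAt (fun t : ℝ => t * ⟪gradω v, w⟫) ⟪gradω v, w⟫ t :=
      hasDerivAt_mul_const _
    have h3 : HasDerivAt (fun t : ℝ => t ^ 2 / 2 * C) (t * C) t := by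
      have := ((hasDerivAt_pow 2 t).div_const 2).mul_const C
      refine this.congr_deriv ?_
      norm_num
    exact (h1.sub h2).sub h3
  have hmono : MonotoneOn g (Set.Icc 0 1) := by
    apply monotoneOn_of_deriv_nonneg (convex_Icc 0 1)
    · intro t ht
      exact ((hderiv t ht).continuousAt).continuousWithinAt
    · intro t ht
      rw [interior_Icc] at ht
      exact ((hderiv t (Set.mem_Icc_of_Ioo ht)).differentiableAt).differentiableWithinAt
    · intro t ht
      rw [interior_Icc] at ht
      rw [(hderiv t (Set.mem_Icc_of_Ioo ht)).deriv]
      have hxt : v + t • w ∈ Z := hmem t (Set.mem_Icc_of_Ioo ht)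
      have hs := hstrong _ hxt v hv
      have he : v + t • w - v = t • w := by abel
      rw [he] at hs
      have hn : nrm (t • w) = t * nrm w := by
        rw [hh, abs_of_pos ht.1]
      rw [hn, real_inner_smul_right] at hs
      have ht0 : 0 < t := ht.1
      have : ⟪gradω (v + t • w) - gradω v, w⟫ ≥ t * C := by
        rw [hC]
        nlinarith [hs]
      rw [inner_sub_left] at this
      linarith
  have h01 := hmono (Set.left_mem_Icc.2 zero_le_one) (Set.right_mem_Icc.2 zero_le_one) zero_le_one
  have hg0 : g 0 = ω v := by simp [hg]
  have hg1 : g 1 = ω z - ⟪gradω v, w⟫ - C / 2 := by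
    simp [hg, hw]
    ring
  rw [hg0, hg1] at h01
  linarith

/-- Mirror Prox one-step inequality. -/
theorem mirror_prox_one_step {n : ℕ}
    (Z : Set (EuclideanSpace ℝ (Fin n))) (hZconv : Convex ℝ Z) (hZcomp : IsCompact Z)
    (nrm dnrm : EuclideanSpace ℝ (Fin n) → ℝ)
    (hnrm_homog : ∀ (c : ℝ) (a : EuclideanSpace ℝ (Fin n)), nrm (c • a) = |c| * nrm a)
    (hnrm_tri : ∀ a b : EuclideanSpace ℝ (Fin n), nrm (a + b) ≤ nrm a + nrm b)
    (hdual : ∀ ξ z : EuclideanSpace ℝ (Fin n), ⟪ξ, z⟫ ≤ dnrm ξ * nrm z)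
    (ω : EuclideanSpace ℝ (Fin n) → ℝ)
    (gradω : EuclideanSpace ℝ (Fin n) → EuclideanSpace ℝ (Fin n))
    (hdiff : ∀ z ∈ Z, HasGradientAt ω (gradω z) z)
    (hstrong : ∀ z' ∈ Z, ∀ z'' ∈ Z,
      ⟪gradω z' - gradω z'', z' - z''⟫ ≥ (nrm (z' - z'')) ^ 2)
    (V : EuclideanSpace ℝ (Fin n) → EuclideanSpace ℝ (Fin n) → ℝ)
    (hV : ∀ z z', V z z' = ω z' - ω z - ⟪gradω z, z' - z⟫)
    (γ : ℝ) (hγ : 0 < γ) (η ξ : EuclideanSpace ℝ (Fin n))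
    (vt zt vt1 : EuclideanSpace ℝ (Fin n)) (hvt : vt ∈ Z) (hzt : zt ∈ Z) (hvt1 : vt1 ∈ Z)
    (hminz : IsMinOn (fun z => γ * ⟪η, z⟫ + V vt z) Z zt)
    (hminv : IsMinOn (fun z => γ * ⟪ξ, z⟫ + V vt z) Z vt1) :
    ∀ z ∈ Z, γ * ⟪ξ, zt - z⟫ ≤
      V vt z - V vt1 z + 1 / 2 * (γ ^ 2 * (dnrm (ξ - η)) ^ 2 - (nrm (zt - vt)) ^ 2) := by
  intro z hz
  have hminz' : IsMinOn
      (fun w => γ * ⟪η, w⟫ + (ω w - ω vt - ⟪gradω vt, w - vt⟫)) Z zt := by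
    simpa only [hV] using hminz
  have hminv' : IsMinOn
      (fun w => γ * ⟪ξ, w⟫ + (ω w - ω vt - ⟪gradω vt, w - vt⟫)) Z vt1 := by
    simpa only [hV] using hminv
  -- optimality of vt1 tested at z
  have h1 := mp_opt_cond hZconv (hdiff vt1 hvt1) γ hminv' hvt1 hz
  -- optimality of zt tested at vt1
  have h2 := mp_opt_cond hZconv (hdiff zt hzt) γ hminz' hzt hvt1
  -- duality bound
  have h3 := hdual (ξ - η) (zt - vt1)
  have h3' : γ * ⟪ξ - η, zt - vt1⟫ ≤ γ * (dnrm (ξ - η) * nrm (zt - vt1)) :=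
    mul_le_mul_of_nonneg_left h3 hγ.le
  -- Bregman lower bounds
  have h4 := mp_bregman_lb hZconv nrm hnrm_homog hdiff hstrong hzt hvt1
  have h5 := mp_bregman_lb hZconv nrm hnrm_homog hdiff hstrong hvt hzt
  have hsymm : nrm (zt - vt1) = nrm (vt1 - zt) := by
    have := hnrm_homog (-1) (vt1 - zt)
    simpa [neg_sub] using this
  have hsq := sq_nonneg (γ * dnrm (ξ - η) - nrm (vt1 - zt))
  rw [hV, hV]
  rw [hsymm] at h3'
  simp only [inner_sub_left, inner_sub_right] at h1 h2 h3' h4 h5 ⊢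
  nlinarith [h1, h2, h3', h4, h5, hsq]
end

section
/- Let f_1,...,f_T be functions on X satisfying f_t(x) ≤ f_t(x') + ⟨∇f_t(x), x-x'⟩ - α V_x(x') for all x,x' ∈ X with α > 0, and with ‖∇f_t(x)‖_* ≤ G for all x ∈ X, t ∈ [T]. With weights θ_t = 2t/(T(T+1)) and Mirror Descent steps x_{t+1} = argmin_{x∈X}{γ_t⟨∇f_t(x_t), x⟩ + V_{x_t}(x)} with step sizes γ_t = 2/(α(t+1)), the weighted regret satisfies ∑_{t=1}^T θ_t f_t(x_t) - inf_{x∈X} ∑_{t=1}^T θ_t f_t(x) ≤ 2G²/(α(T+1)). -/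
open scoped RealInnerProductSpace BigOperators

section Aux

open InnerProductSpace

variable {E : Type*} [NormedAddCommGroup E] [InnerProductSpace ℝ E] [CompleteSpace E]

/-- derivative of `F` along a line, from a gradient. -/
lemma MD_line_hasDerivAt {F : E → ℝ} {p : E} {x₀ v : E} {s : ℝ}
    (hF : HasGradientAt F p (x₀ + s • v)) :
    HasDerivAt (fun t : ℝ => F (x₀ + t • v)) ⟪p, v⟫ s := by
  have hc : HasDerivAt (fun t : ℝ => x₀ + t • v) v s :=
    by simpa using ((hasDerivAt_id s).smul_const v).const_add x₀
  have := (hF.hasFDerivAt).comp_hasDerivAt s hc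
  simpa [InnerProductSpace.toDual_apply_apply, Function.comp_def] using this

/-- First-order optimality condition on a convex set. -/
lemma MD_first_order_opt {X : Set E} (hX : Convex ℝ X) {F : E → ℝ} {p x₀ : E}
    (hx₀ : x₀ ∈ X) (hmin : IsMinOn F X x₀) (hF : HasGradientAt F p x₀)
    {x : E} (hx : x ∈ X) : 0 ≤ ⟪p, x - x₀⟫ := by
  set φ : ℝ → ℝ := fun s => F (x₀ + s • (x - x₀)) with hφ
  have hd : HasDerivAt φ ⟪p, x - x₀⟫ 0 := by
    apply MD_line_hasDerivAt
    simpa using hF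
  have htend : Filter.Tendsto (slope φ 0) (nhdsWithin 0 (Set.Ioi 0)) (nhds ⟪p, x - x₀⟫) :=
    (hasDerivAt_iff_tendsto_slope.mp hd).mono_left
      (nhdsWithin_mono _ (fun t ht => ne_of_gt ht))
  refine ge_of_tendsto htend ?_
  filter_upwards [Ioc_mem_nhdsGT_of_mem (Set.mem_Ico.mpr ⟨le_rfl, one_pos⟩)] with s hs
  rcases hs with ⟨hs0, hs1⟩
  have hmem : x₀ + s • (x - x₀) ∈ X := hX.add_smul_sub_mem hx₀ hx ⟨le_of_lt hs0, hs1⟩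
  have hle : φ 0 ≤ φ s := by simpa [hφ] using hmin hmem
  rw [slope_def_field, sub_zero]
  exact div_nonneg (sub_nonneg.mpr hle) hs0.le

/-- Strong convexity (via gradient monotonicity) lower bound for the Bregman divergence. -/
lemma MD_bregman_lb {X : Set E} (hX : Convex ℝ X) (nrm : E → ℝ)
    (hnrm_homog : ∀ (c : ℝ) (a : E), nrm (c • a) = |c| * nrm a)
    (ω : E → ℝ) (gradω : E → E)
    (hdiff : ∀ z ∈ X, HasGradientAt ω (gradω z) z)
    (hstrong : ∀ z' ∈ X, ∀ z'' ∈ X, ⟪gradω z' - gradω z'', z' - z''⟫ ≥ (nrm (z' - z'')) ^ 2)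
    {z z' : E} (hz : z ∈ X) (hz' : z' ∈ X) :
    (nrm (z' - z)) ^ 2 / 2 ≤ ω z' - ω z - ⟪gradω z, z' - z⟫ := by
  set v : E := z' - z with hv
  set K : ℝ := (nrm v) ^ 2 with hK
  set c : ℝ := ⟪gradω z, v⟫ with hc
  set φ : ℝ → ℝ := fun t => ω (z + t • v) - (t * c + t ^ 2 * K / 2) with hφ
  have hmem : ∀ t ∈ Set.Icc (0:ℝ) 1, z + t • v ∈ X := fun t ht =>
    hX.add_smul_sub_mem hz hz' ht
  have hderiv : ∀ t ∈ Set.Icc (0:ℝ) 1,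
      HasDerivAt φ (⟪gradω (z + t • v), v⟫ - (c + t * K)) t := by
    intro t ht
    have h1 : HasDerivAt (fun t : ℝ => ω (z + t • v)) ⟪gradω (z + t • v), v⟫ t :=
      MD_line_hasDerivAt (hdiff _ (hmem t ht))
    have h2 : HasDerivAt (fun t : ℝ => t * c + t ^ 2 * K / 2) (c + t * K) t := by
      have h := ((hasDerivAt_id t).mul_const c).add
        (((hasDerivAt_pow 2 t)).mul_const (K / 2))
      have he : ((fun y : ℝ => id y * c) + fun y : ℝ => y ^ 2 * (K / 2)) = fun t : ℝ => t * c + t ^ 2 * K / 2 := by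
        funext s; simp; ring
      rw [he] at h
      convert h using 1
      · rfl
      · rfl
      simp
      ring
    exact h1.sub h2
  have hmono : MonotoneOn φ (Set.Icc (0:ℝ) 1) := by
    apply monotoneOn_of_deriv_nonneg (convex_Icc 0 1)
    · intro t ht
      exact ((hderiv t ht).differentiableAt).continuousAt.continuousWithinAt
    · intro t ht
      rw [interior_Icc] at ht
      exact ((hderiv t (Set.mem_Icc_of_Ioo ht)).differentiableAt).differentiableWithinAt
    · intro t ht
      rw [interior_Icc] at ht
      rw [(hderiv t (Set.mem_Icc_of_Ioo ht)).deriv]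
      have hstr := hstrong (z + t • v) (hmem t (Set.mem_Icc_of_Ioo ht)) z hz
      have hsimp : z + t • v - z = t • v := by abel
      rw [hsimp] at hstr
      have htpos : 0 < t := ht.1
      have hinner : ⟪gradω (z + t • v) - gradω z, t • v⟫ = t * ⟪gradω (z + t • v) - gradω z, v⟫ :=
        real_inner_smul_right _ _ _
      have hnrmt : nrm (t • v) = t * nrm v := by
        rw [hnrm_homog, abs_of_pos htpos]
      rw [hinner, hnrmt] at hstr
      have h3 : t * ⟪gradω (z + t • v) - gradω z, v⟫ ≥ t * (t * K) := by
        calc t * ⟪gradω (z + t • v) - gradω z, v⟫ ≥ (t * nrm v) ^ 2 := hstr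
          _ = t * (t * K) := by rw [hK]; ring
      have h4 : ⟪gradω (z + t • v) - gradω z, v⟫ ≥ t * K :=
        le_of_mul_le_mul_left (by linarith) htpos
      rw [inner_sub_left] at h4
      rw [hc]
      linarith
  have hle := hmono (Set.mem_Icc.mpr ⟨le_rfl, zero_le_one⟩)
    (Set.mem_Icc.mpr ⟨zero_le_one, le_rfl⟩) zero_le_one
  simp only [hφ, zero_smul, add_zero, one_smul] at hle
  have : z + v = z' := by rw [hv]; abel
  rw [this] at hle
  nlinarith [hle]

end Aux

set_option maxHeartbeats 1000000 in
/-- Mirror Descent with increasing weights `θ_t = 2t/(T(T+1))` and step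
sizes `γ_t = 2/(α(t+1))` for `α`-strongly convex (relative to `ω`) losses with
`‖∇f_t‖_* ≤ G` achieves weighted regret at most `2G²/(α(T+1))`.
Index `i ∈ Finset.range T` represents time step `t = i+1`. -/
theorem mirror_descent_strongly_convex_weighted_regret {n T : ℕ} (hT : 0 < T)
    (X : Set (EuclideanSpace ℝ (Fin n))) (hXconv : Convex ℝ X) (hXcomp : IsCompact X)
    (nrm dnrm : EuclideanSpace ℝ (Fin n) → ℝ)
    (hnrm_homog : ∀ (c : ℝ) (a : EuclideanSpace ℝ (Fin n)), nrm (c • a) = |c| * nrm a)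
    (hnrm_tri : ∀ a b : EuclideanSpace ℝ (Fin n), nrm (a + b) ≤ nrm a + nrm b)
    (hdual : ∀ ξ z : EuclideanSpace ℝ (Fin n), ⟪ξ, z⟫ ≤ dnrm ξ * nrm z)
    (ω : EuclideanSpace ℝ (Fin n) → ℝ)
    (gradω : EuclideanSpace ℝ (Fin n) → EuclideanSpace ℝ (Fin n))
    (hdiff : ∀ z ∈ X, HasGradientAt ω (gradω z) z)
    (hstrong : ∀ z' ∈ X, ∀ z'' ∈ X,
      ⟪gradω z' - gradω z'', z' - z''⟫ ≥ (nrm (z' - z'')) ^ 2)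
    (V : EuclideanSpace ℝ (Fin n) → EuclideanSpace ℝ (Fin n) → ℝ)
    (hV : ∀ z z', V z z' = ω z' - ω z - ⟪gradω z, z' - z⟫)
    (α : ℝ) (hα : 0 < α)
    (f : ℕ → EuclideanSpace ℝ (Fin n) → ℝ)
    (gradf : ℕ → EuclideanSpace ℝ (Fin n) → EuclideanSpace ℝ (Fin n))
    (hfdiff : ∀ i < T, ∀ x ∈ X, HasGradientAt (f i) (gradf i x) x)
    (hfsc : ∀ i < T, ∀ x ∈ X, ∀ x' ∈ X,
      f i x ≤ f i x' + ⟪gradf i x, x - x'⟫ - α * V x x')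
    (G : ℝ) (hG : 0 < G) (hGbound : ∀ i < T, ∀ x ∈ X, dnrm (gradf i x) ≤ G)
    -- weights θ_t = 2t/(T(T+1)) and step sizes γ_t = 2/(α(t+1)), with t = i+1
    (θ : ℕ → ℝ) (hθ : ∀ i, θ i = 2 * ((i : ℝ) + 1) / ((T : ℝ) * ((T : ℝ) + 1)))
    (γ : ℕ → ℝ) (hγ : ∀ i, γ i = 2 / (α * ((i : ℝ) + 2)))
    (xs : ℕ → EuclideanSpace ℝ (Fin n))
    (hx0 : xs 0 ∈ X) (hx0center : IsMinOn ω X (xs 0))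
    (hupdate : ∀ i < T, xs (i + 1) ∈ X ∧
      IsMinOn (fun z => γ i * ⟪gradf i (xs i), z⟫ + V (xs i) z) X (xs (i + 1))) :
    ∀ x ∈ X,
      ∑ i ∈ Finset.range T, θ i * f i (xs i) - ∑ i ∈ Finset.range T, θ i * f i x ≤
        2 * G ^ 2 / (α * ((T : ℝ) + 1)) := by
  intro x hx
  -- iterates stay in X
  have hmem : ∀ i ≤ T, xs i ∈ X := by
    intro i
    induction i with
    | zero => intro _; exact hx0
    | succ k _ => intro hk; exact (hupdate k (Nat.lt_of_succ_le hk)).1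
  -- Bregman divergence lower bound and nonnegativity
  have hVlb : ∀ z ∈ X, ∀ z' ∈ X, (nrm (z' - z)) ^ 2 / 2 ≤ V z z' := by
    intro z hz z' hz'
    rw [hV]
    exact MD_bregman_lb hXconv nrm hnrm_homog ω gradω hdiff hstrong hz hz'
  have hVnn : ∀ z ∈ X, ∀ z' ∈ X, 0 ≤ V z z' := by
    intro z hz z' hz'
    have := hVlb z hz z' hz'
    nlinarith [sq_nonneg (nrm (z' - z))]
  have hnrm_nonneg : ∀ y, 0 ≤ nrm y := by
    intro y
    have h0 : nrm (0 : EuclideanSpace ℝ (Fin n)) = 0 := by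
      simpa using hnrm_homog 0 y
    have hneg : nrm (-y) = nrm y := by simpa using hnrm_homog (-1) y
    have htri := hnrm_tri y (-y)
    have hy0 : y + -y = (0 : EuclideanSpace ℝ (Fin n)) := by abel
    rw [hy0, h0, hneg] at htri
    linarith
  -- Lyapunov sequence
  set A : ℕ → ℝ := fun i => α * (i : ℝ) * ((i : ℝ) + 1) / 2 * V (xs i) x with hA
  -- per-step inequality
  have keyw : ∀ i < T, ((i : ℝ) + 1) * (f i (xs i) - f i x) ≤ A i - A (i + 1) + G ^ 2 / α := by
    intro i hi
    have hxiX : xs i ∈ X := hmem i hi.le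
    have hxi1X : xs (i + 1) ∈ X := hmem (i + 1) hi
    set N : ℝ := (i : ℝ) + 1 with hN
    have hNpos : (0:ℝ) < N := by positivity
    set cc : ℝ := α * N * (N + 1) / 2 with hcc
    have hccpos : 0 < cc := by rw [hcc]; positivity
    have hγpos : 0 < γ i := by rw [hγ]; positivity
    have hγc : γ i * cc = N := by
      rw [hγ, hcc, hN]
      field_simp
      ring
    -- first-order optimality for the prox step
    set g := gradf i (xs i) with hg
    set xi := xs i with hxi
    set xi1 := xs (i + 1) with hxi1
    have hgradF : HasGradientAt (fun z => γ i * ⟪g, z⟫ + V xi z)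
        (γ i • g - gradω xi + gradω xi1) xi1 := by
      rw [hasGradientAt_iff_hasFDerivAt]
      have hℓ : HasFDerivAt (fun z : EuclideanSpace ℝ (Fin n) =>
          (γ i • InnerProductSpace.toDual ℝ (EuclideanSpace ℝ (Fin n)) g
            - InnerProductSpace.toDual ℝ (EuclideanSpace ℝ (Fin n)) (gradω xi)) z)
          (γ i • InnerProductSpace.toDual ℝ (EuclideanSpace ℝ (Fin n)) g
            - InnerProductSpace.toDual ℝ (EuclideanSpace ℝ (Fin n)) (gradω xi)) xi1 :=
        ContinuousLinearMap.hasFDerivAt _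
      have hω := (hdiff xi1 hxi1X).hasFDerivAt
      have hsum := (hℓ.add hω).add_const (-(ω xi) + ⟪gradω xi, xi⟫)
      have hfun : (fun z : EuclideanSpace ℝ (Fin n) =>
          (γ i • InnerProductSpace.toDual ℝ (EuclideanSpace ℝ (Fin n)) g
            - InnerProductSpace.toDual ℝ (EuclideanSpace ℝ (Fin n)) (gradω xi)) z
            + ω z + (-(ω xi) + ⟪gradω xi, xi⟫)) = fun z => γ i * ⟪g, z⟫ + V xi z := by
        funext z
        simp only [ContinuousLinearMap.sub_apply, ContinuousLinearMap.smul_apply,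
          InnerProductSpace.toDual_apply_apply, smul_eq_mul]
        rw [hV, inner_sub_right]
        ring
      simp only [Pi.add_apply] at hsum
      rw [hfun] at hsum
      convert hsum using 1
      · rfl
      · rfl
      ext y
      simp [inner_add_left, inner_sub_left, real_inner_smul_left]
    have hopt := MD_first_order_opt hXconv hxi1X (hupdate i hi).2 hgradF hx
    have hthree : ⟪gradω xi1 - gradω xi, x - xi1⟫ = V xi x - V xi1 x - V xi xi1 := by
      rw [hV, hV, hV]
      simp only [inner_sub_left, inner_sub_right]
      ring
    have h1 : γ i * ⟪g, xi1 - x⟫ ≤ V xi x - V xi1 x - V xi xi1 := by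
      have hsplit : ⟪γ i • g - gradω xi + gradω xi1, x - xi1⟫
          = γ i * ⟪g, x - xi1⟫ + ⟪gradω xi1 - gradω xi, x - xi1⟫ := by
        simp only [inner_add_left, inner_sub_left, real_inner_smul_left]
        ring
      have hneg : ⟪g, xi1 - x⟫ = -⟪g, x - xi1⟫ := by
        rw [← inner_neg_right]
        congr 1
        abel
      rw [hsplit, hthree] at hopt
      rw [hneg]
      linarith
    set a : ℝ := nrm (xi - xi1) with ha
    have hann : 0 ≤ a := hnrm_nonneg _
    have h2 : ⟪g, xi - xi1⟫ ≤ G * a := by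
      calc ⟪g, xi - xi1⟫ ≤ dnrm g * nrm (xi - xi1) := hdual g (xi - xi1)
        _ ≤ G * a := by
          rw [← ha]
          exact mul_le_mul_of_nonneg_right (hGbound i hi xi hxiX) hann
    have h3 : a ^ 2 / 2 ≤ V xi xi1 := by
      have hlb := hVlb xi hxiX xi1 hxi1X
      have hsymm : nrm (xi1 - xi) = a := by
        rw [ha]
        have h := hnrm_homog (-1) (xi1 - xi)
        simp only [abs_neg, abs_one, one_mul, neg_smul, one_smul, neg_sub] at h
        exact h.symm
      rw [hsymm] at hlb
      exact hlb
    have h4 : f i xi - f i x ≤ ⟪g, xi - xi1⟫ + ⟪g, xi1 - x⟫ - α * V xi x := by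
      have hsc := hfsc i hi xi hxiX x hx
      have hsplit2 : ⟪g, xi - x⟫ = ⟪g, xi - xi1⟫ + ⟪g, xi1 - x⟫ := by
        rw [← inner_add_right]
        congr 1
        abel
      rw [hsplit2] at hsc
      linarith
    have stepA : N * ⟪g, xi1 - x⟫ ≤ cc * (V xi x - V xi1 x - V xi xi1) := by
      have hmul := mul_le_mul_of_nonneg_left h1 hccpos.le
      calc N * ⟪g, xi1 - x⟫ = cc * (γ i * ⟪g, xi1 - x⟫) := by rw [← hγc]; ring
        _ ≤ cc * (V xi x - V xi1 x - V xi xi1) := hmul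
    have stepB : N * ⟪g, xi - xi1⟫ ≤ N * (G * a) := mul_le_mul_of_nonneg_left h2 hNpos.le
    have stepC : N * (G * a) - cc * V xi xi1 ≤ G ^ 2 / α := by
      have hW : cc * (a ^ 2 / 2) ≤ cc * V xi xi1 := mul_le_mul_of_nonneg_left h3 hccpos.le
      rw [le_div_iff₀ hα]
      have hN1 : (0:ℝ) < N + 1 := by linarith
      set s : ℝ := α * (N + 1) * a with hs
      have hsq : s * G ≤ s ^ 2 / 4 + G ^ 2 := by nlinarith [sq_nonneg (s - 2 * G)]
      have hsqN := mul_le_mul_of_nonneg_left hsq hNpos.le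
      have hP : (N + 1) * ((N * (G * a) - cc * (a ^ 2 / 2)) * α) ≤ (N + 1) * G ^ 2 := by
        calc (N + 1) * ((N * (G * a) - cc * (a ^ 2 / 2)) * α)
            = N * (s * G) - N * (s ^ 2 / 4) := by rw [hs, hcc]; ring
          _ ≤ N * (s ^ 2 / 4 + G ^ 2) - N * (s ^ 2 / 4) := by linarith
          _ = N * G ^ 2 := by ring
          _ ≤ (N + 1) * G ^ 2 := by nlinarith [sq_nonneg G]
      have hQ : (N * (G * a) - cc * (a ^ 2 / 2)) * α ≤ G ^ 2 :=
        le_of_mul_le_mul_left hP hN1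
      have hmono2 : (N * (G * a) - cc * V xi xi1) * α ≤ (N * (G * a) - cc * (a ^ 2 / 2)) * α := by
        apply mul_le_mul_of_nonneg_right _ hα.le
        linarith
      exact hmono2.trans hQ
    have hgoal : N * (f i xi - f i x) ≤ (cc - α * N) * V xi x - cc * V xi1 x + G ^ 2 / α := by
      have h4N := mul_le_mul_of_nonneg_left h4 hNpos.le
      have e1 : N * (⟪g, xi - xi1⟫ + ⟪g, xi1 - x⟫ - α * V xi x)
          = N * ⟪g, xi - xi1⟫ + N * ⟪g, xi1 - x⟫ - α * N * V xi x := by ring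
      rw [e1] at h4N
      have e2 : cc * (V xi x - V xi1 x - V xi xi1)
          = cc * V xi x - cc * V xi1 x - cc * V xi xi1 := by ring
      rw [e2] at stepA
      calc N * (f i xi - f i x)
          ≤ N * ⟪g, xi - xi1⟫ + N * ⟪g, xi1 - x⟫ - α * N * V xi x := h4N
        _ ≤ N * (G * a) + (cc * V xi x - cc * V xi1 x - cc * V xi xi1) - α * N * V xi x := by
            have hBA := add_le_add stepB stepA
            linarith
        _ = (N * (G * a) - cc * V xi xi1)
            + (cc * V xi x - cc * V xi1 x - α * N * V xi x) := by ring
        _ ≤ G ^ 2 / α + (cc * V xi x - cc * V xi1 x - α * N * V xi x) :=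
            add_le_add_left stepC _
        _ = (cc - α * N) * V xi x - cc * V xi1 x + G ^ 2 / α := by ring
    calc N * (f i xi - f i x)
        ≤ (cc - α * N) * V xi x - cc * V xi1 x + G ^ 2 / α := hgoal
      _ = A i - A (i + 1) + G ^ 2 / α := by
          simp only [hA, hxi, hxi1]
          push_cast
          rw [hcc, hN]
          ring
  -- summation
  have hTpos : (0:ℝ) < T := by exact_mod_cast hT
  have hS : ∑ i ∈ Finset.range T, (((i:ℝ) + 1) * (f i (xs i) - f i x)) ≤ (T:ℝ) * (G ^ 2 / α) := by
    calc ∑ i ∈ Finset.range T, (((i:ℝ) + 1) * (f i (xs i) - f i x))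
        ≤ ∑ i ∈ Finset.range T, (A i - A (i + 1) + G ^ 2 / α) := by
          apply Finset.sum_le_sum
          intro i hi
          exact keyw i (Finset.mem_range.mp hi)
      _ = (A 0 - A T) + (T:ℝ) * (G ^ 2 / α) := by
          rw [Finset.sum_add_distrib, Finset.sum_range_sub', Finset.sum_const,
            Finset.card_range, nsmul_eq_mul]
      _ ≤ (T:ℝ) * (G ^ 2 / α) := by
          have hA0 : A 0 = 0 := by simp [hA]
          have hAT : 0 ≤ A T := by
            simp only [hA]
            exact mul_nonneg (by positivity) (hVnn (xs T) (hmem T le_rfl) x hx)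
          linarith
  have hrw : (∑ i ∈ Finset.range T, θ i * f i (xs i)) - ∑ i ∈ Finset.range T, θ i * f i x
      = (2 / ((T:ℝ) * ((T:ℝ) + 1))) *
        ∑ i ∈ Finset.range T, (((i:ℝ) + 1) * (f i (xs i) - f i x)) := by
    rw [← Finset.sum_sub_distrib, Finset.mul_sum]
    apply Finset.sum_congr rfl
    intro i _
    rw [hθ]
    ring
  rw [hrw]
  calc (2 / ((T:ℝ) * ((T:ℝ) + 1))) *
        ∑ i ∈ Finset.range T, (((i:ℝ) + 1) * (f i (xs i) - f i x))
      ≤ (2 / ((T:ℝ) * ((T:ℝ) + 1))) * ((T:ℝ) * (G ^ 2 / α)) :=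
        mul_le_mul_of_nonneg_left hS (by positivity)
    _ = 2 * G ^ 2 / (α * ((T:ℝ) + 1)) := by
        field_simp
end

section
/- Under the strong convexity assumption with parameter α and gradient bound G, with step sizes γ_t = 2/(α(t+1)) the Mirror Descent iterates satisfy, for every x ∈ X, ∑_{t=1}^T t·(⟨∇f_t(x_t), x_t - x⟩ - α V_{x_t}(x)) ≤ G²T/α. In particular the coefficient telescoping identity t((1/γ_t)V_{x_t}(x) - (1/γ_t)V_{x_{t+1}}(x) - α V_{x_t}(x)) = (α(t-1)t/2)V_{x_t}(x) - (α t(t+1)/2)V_{x_{t+1}}(x) holds. -/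
open scoped RealInnerProductSpace BigOperators

private lemma slope_min_nonneg' {g : ℝ → ℝ} {D : ℝ} (hg : HasDerivAt g D 0)
    (hmin : ∀ t ∈ Set.Icc (0:ℝ) 1, g 0 ≤ g t) : 0 ≤ D := by
  have h1 : HasDerivWithinAt g D (Set.Ioi 0) 0 := hg.hasDerivWithinAt
  rw [hasDerivWithinAt_iff_tendsto_slope] at h1
  rw [Set.diff_singleton_eq_self (by simp)] at h1
  refine ge_of_tendsto h1 ?_
  filter_upwards [Ioc_mem_nhdsGT_of_mem (Set.left_mem_Ico.mpr one_pos)] with t ht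
  have ht0 : 0 < t := ht.1
  have hle := hmin t ⟨le_of_lt ht0, ht.2⟩
  rw [slope_def_field]
  apply div_nonneg (by linarith) (by linarith)

private lemma line_hasDerivAt' {E : Type*} [NormedAddCommGroup E] [InnerProductSpace ℝ E]
    [CompleteSpace E] {ω : E → ℝ} {g : E} (p v : E) (t : ℝ)
    (h : HasGradientAt ω g (p + t • v)) :
    HasDerivAt (fun s : ℝ => ω (p + s • v)) ⟪g, v⟫ t := by
  have hline : HasDerivAt (fun s : ℝ => p + s • v) v t := by
    simpa using ((hasDerivAt_id t).smul_const v).const_add p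
  have := h.hasFDerivAt.comp_hasDerivAt t hline
  simpa [Function.comp_def, InnerProductSpace.toDual_apply_apply] using this

private lemma bregman_lb' {E : Type*} [NormedAddCommGroup E] [InnerProductSpace ℝ E]
    [CompleteSpace E] {X : Set E} (hXconv : Convex ℝ X) (nrm : E → ℝ)
    (hnrm_homog : ∀ (c : ℝ) (a : E), nrm (c • a) = |c| * nrm a)
    {ω : E → ℝ} {gradω : E → E}
    (hdiff : ∀ z ∈ X, HasGradientAt ω (gradω z) z)
    (hstrong : ∀ z' ∈ X, ∀ z'' ∈ X, ⟪gradω z' - gradω z'', z' - z''⟫ ≥ (nrm (z' - z'')) ^ 2)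
    {z z' : E} (hz : z ∈ X) (hz' : z' ∈ X) :
    (nrm (z' - z)) ^ 2 / 2 ≤ ω z' - ω z - ⟪gradω z, z' - z⟫ := by
  set h := z' - z with hh
  set n2 := (nrm h) ^ 2 with hn2
  set F : ℝ → ℝ := fun t => ω (z + t • h) - t ^ 2 / 2 * n2 - t * ⟪gradω z, h⟫ with hF
  have hmemt : ∀ t ∈ Set.Icc (0:ℝ) 1, z + t • h ∈ X := by
    intro t ht
    exact hXconv.add_smul_sub_mem hz hz' ht
  have hder : ∀ t ∈ Set.Icc (0:ℝ) 1,
      HasDerivAt F (⟪gradω (z + t • h), h⟫ - t * n2 - ⟪gradω z, h⟫) t := by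
    intro t ht
    have hB : HasDerivAt (fun s : ℝ => ω (z + s • h)) ⟪gradω (z + t • h), h⟫ t :=
      line_hasDerivAt' z h t (hdiff _ (hmemt t ht))
    have hC : HasDerivAt (fun s : ℝ => s ^ 2 / 2 * n2) (t * n2) t := by
      have := ((hasDerivAt_pow 2 t).div_const 2).mul_const n2
      convert this using 1
      · rfl
      · rfl
      · simp
    have hD : HasDerivAt (fun s : ℝ => s * ⟪gradω z, h⟫) ⟪gradω z, h⟫ t := by
      simpa using (hasDerivAt_id t).mul_const ⟪gradω z, h⟫
    exact (hB.sub hC).sub hD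
  have hmono : MonotoneOn F (Set.Icc (0:ℝ) 1) := by
    apply monotoneOn_of_deriv_nonneg (convex_Icc 0 1)
    · intro t ht
      exact (hder t ht).continuousAt.continuousWithinAt
    · intro t ht
      rw [interior_Icc] at ht
      exact ((hder t ⟨le_of_lt ht.1, le_of_lt ht.2⟩).differentiableAt).differentiableWithinAt
    · intro t ht
      rw [interior_Icc] at ht
      rw [(hder t ⟨le_of_lt ht.1, le_of_lt ht.2⟩).deriv]
      have hs := hstrong (z + t • h) (hmemt t ⟨le_of_lt ht.1, le_of_lt ht.2⟩) z hz
      rw [show z + t • h - z = t • h by abel] at hs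
      rw [real_inner_smul_right, inner_sub_left, hnrm_homog, abs_of_pos ht.1] at hs
      have ht0 := ht.1
      have hexp : (t * nrm h) ^ 2 = t ^ 2 * n2 := by rw [hn2]; ring
      rw [hexp] at hs
      nlinarith [hs, ht0]
  have hle := hmono (Set.left_mem_Icc.mpr zero_le_one) (Set.right_mem_Icc.mpr zero_le_one)
    zero_le_one
  have hF0 : F 0 = ω z := by simp [hF]
  have hF1 : F 1 = ω z' - 1 / 2 * n2 - ⟪gradω z, h⟫ := by
    simp [hF, hh]
  rw [hF0, hF1] at hle
  rw [hn2] at hle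
  linarith

/-- Under strong convexity with parameter `α` and gradient bound `G`,
with step sizes `γ_t = 2/(α(t+1))` the Mirror Descent iterates satisfy, for every
`x ∈ X`, `∑_{t=1}^T t·(⟨∇f_t(x_t), x_t - x⟩ - α V_{x_t}(x)) ≤ G²T/α`, and the
coefficient telescoping identity
`t((1/γ_t)V_{x_t}(x) - (1/γ_t)V_{x_{t+1}}(x) - α V_{x_t}(x))
  = (α(t-1)t/2)V_{x_t}(x) - (α t(t+1)/2)V_{x_{t+1}}(x)` holds.
Index `i ∈ Finset.range T` represents time step `t = i+1`. -/
theorem mirror_descent_strongly_convex_telescoping {n T : ℕ} (hT : 0 < T)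
    (X : Set (EuclideanSpace ℝ (Fin n))) (hXconv : Convex ℝ X) (hXcomp : IsCompact X)
    (nrm dnrm : EuclideanSpace ℝ (Fin n) → ℝ)
    (hnrm_homog : ∀ (c : ℝ) (a : EuclideanSpace ℝ (Fin n)), nrm (c • a) = |c| * nrm a)
    (hnrm_tri : ∀ a b : EuclideanSpace ℝ (Fin n), nrm (a + b) ≤ nrm a + nrm b)
    (hdual : ∀ ξ z : EuclideanSpace ℝ (Fin n), ⟪ξ, z⟫ ≤ dnrm ξ * nrm z)
    (ω : EuclideanSpace ℝ (Fin n) → ℝ)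
    (gradω : EuclideanSpace ℝ (Fin n) → EuclideanSpace ℝ (Fin n))
    (hdiff : ∀ z ∈ X, HasGradientAt ω (gradω z) z)
    (hstrong : ∀ z' ∈ X, ∀ z'' ∈ X,
      ⟪gradω z' - gradω z'', z' - z''⟫ ≥ (nrm (z' - z'')) ^ 2)
    (V : EuclideanSpace ℝ (Fin n) → EuclideanSpace ℝ (Fin n) → ℝ)
    (hV : ∀ z z', V z z' = ω z' - ω z - ⟪gradω z, z' - z⟫)
    (α : ℝ) (hα : 0 < α)
    (f : ℕ → EuclideanSpace ℝ (Fin n) → ℝ)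
    (gradf : ℕ → EuclideanSpace ℝ (Fin n) → EuclideanSpace ℝ (Fin n))
    (hfdiff : ∀ i < T, ∀ x ∈ X, HasGradientAt (f i) (gradf i x) x)
    (hfsc : ∀ i < T, ∀ x ∈ X, ∀ x' ∈ X,
      f i x ≤ f i x' + ⟪gradf i x, x - x'⟫ - α * V x x')
    (G : ℝ) (hG : 0 < G) (hGbound : ∀ i < T, ∀ x ∈ X, dnrm (gradf i x) ≤ G)
    (γ : ℕ → ℝ) (hγ : ∀ i, γ i = 2 / (α * ((i : ℝ) + 2)))
    (xs : ℕ → EuclideanSpace ℝ (Fin n))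
    (hx0 : xs 0 ∈ X) (hx0center : IsMinOn ω X (xs 0))
    (hupdate : ∀ i < T, xs (i + 1) ∈ X ∧
      IsMinOn (fun z => γ i * ⟪gradf i (xs i), z⟫ + V (xs i) z) X (xs (i + 1))) :
    (∀ x ∈ X,
      ∑ i ∈ Finset.range T,
          ((i : ℝ) + 1) * (⟪gradf i (xs i), xs i - x⟫ - α * V (xs i) x) ≤
        G ^ 2 * T / α) ∧
    (∀ x ∈ X, ∀ i < T,
      ((i : ℝ) + 1) *
          (1 / γ i * V (xs i) x - 1 / γ i * V (xs (i + 1)) x - α * V (xs i) x) =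
        α * (i : ℝ) * ((i : ℝ) + 1) / 2 * V (xs i) x -
          α * ((i : ℝ) + 1) * ((i : ℝ) + 2) / 2 * V (xs (i + 1)) x) := by
  -- basic positivity facts
  have hnrm0 : ∀ a, 0 ≤ nrm a := by
    intro a
    have h0 : nrm (0 : EuclideanSpace ℝ (Fin n)) = 0 := by
      simpa using hnrm_homog 0 0
    have hneg : nrm (-a) = nrm a := by simpa using hnrm_homog (-1) a
    have htri := hnrm_tri a (-a)
    rw [add_neg_cancel, h0, hneg] at htri
    linarith
  have memX : ∀ j, j ≤ T → xs j ∈ X := by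
    intro j
    induction j with
    | zero => intro _; exact hx0
    | succ k _ => intro hk; exact (hupdate k (by omega)).1
  have hγpos : ∀ i : ℕ, 0 < γ i := by
    intro i
    rw [hγ]
    exact div_pos two_pos (mul_pos hα (by positivity))
  have htel : ∀ x ∈ X, ∀ i < T,
      ((i : ℝ) + 1) *
          (1 / γ i * V (xs i) x - 1 / γ i * V (xs (i + 1)) x - α * V (xs i) x) =
        α * (i : ℝ) * ((i : ℝ) + 1) / 2 * V (xs i) x -
          α * ((i : ℝ) + 1) * ((i : ℝ) + 2) / 2 * V (xs (i + 1)) x := by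
    intro x _ i _
    rw [hγ]
    have h2 : ((i : ℝ) + 2) ≠ 0 := by positivity
    have hα' : α ≠ 0 := hα.ne'
    field_simp
    ring
  have hVlb : ∀ z ∈ X, ∀ z' ∈ X, (nrm (z' - z)) ^ 2 / 2 ≤ V z z' := by
    intro z hz z' hz'
    rw [hV]
    exact bregman_lb' hXconv nrm hnrm_homog hdiff hstrong hz hz'
  have hVnn : ∀ z ∈ X, ∀ z' ∈ X, 0 ≤ V z z' := by
    intro z hz z' hz'
    exact le_trans (by positivity) (hVlb z hz z' hz')
  -- key one-step inequality
  have key : ∀ x ∈ X, ∀ i < T,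
      γ i * ⟪gradf i (xs i), xs i - x⟫ ≤
        V (xs i) x - V (xs (i + 1)) x + γ i ^ 2 * G ^ 2 / 2 := by
    intro x hx i hi
    set a := xs i with ha
    set p := xs (i + 1) with hp
    have haX : a ∈ X := memX i (le_of_lt hi)
    have hpX : p ∈ X := (hupdate i hi).1
    set g := gradf i (xs i) with hg'
    set v := x - p with hv
    have hVI : 0 ≤ γ i * ⟪g, v⟫ + (⟪gradω p, v⟫ - ⟪gradω a, v⟫) := by
      have hψeq : (fun t : ℝ => γ i * ⟪g, p + t • v⟫ + V a (p + t • v)) =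
          (fun t : ℝ => γ i * (⟪g, p⟫ + t * ⟪g, v⟫) +
            (ω (p + t • v) - ω a - (⟪gradω a, p - a⟫ + t * ⟪gradω a, v⟫))) := by
        funext t
        rw [hV]
        simp only [inner_add_right, inner_sub_right, real_inner_smul_right]
        ring
      have hψ : HasDerivAt (fun t : ℝ => γ i * ⟪g, p + t • v⟫ + V a (p + t • v))
          (γ i * ⟪g, v⟫ + (⟪gradω p, v⟫ - ⟪gradω a, v⟫)) 0 := by
        rw [hψeq]
        have hA : HasDerivAt (fun t : ℝ => γ i * (⟪g, p⟫ + t * ⟪g, v⟫)) (γ i * ⟪g, v⟫) 0 := by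
          simpa using (((hasDerivAt_id (0:ℝ)).mul_const ⟪g, v⟫).const_add ⟪g, p⟫).const_mul (γ i)
        have hB : HasDerivAt (fun t : ℝ => ω (p + t • v)) ⟪gradω p, v⟫ 0 := by
          have := line_hasDerivAt' (ω := ω) (g := gradω p) p v 0 (by
            rw [show p + (0:ℝ) • v = p by simp]
            exact hdiff p hpX)
          simpa using this
        have hC : HasDerivAt (fun t : ℝ => ⟪gradω a, p - a⟫ + t * ⟪gradω a, v⟫)
            ⟪gradω a, v⟫ 0 := by
          simpa using ((hasDerivAt_id (0:ℝ)).mul_const ⟪gradω a, v⟫).const_add ⟪gradω a, p - a⟫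
        have := hA.add ((hB.sub_const (ω a)).sub hC)
        convert this using 1
        all_goals rfl
      apply slope_min_nonneg' hψ
      intro t ht
      have hmem : p + t • v ∈ X := by
        have := hXconv.add_smul_sub_mem hpX hx ht
        simpa [hv] using this
      have hle := isMinOn_iff.mp (hupdate i hi).2 (p + t • v) hmem
      simpa using hle
    have h3pt : ⟪gradω p, v⟫ - ⟪gradω a, v⟫ = V a x - V p x - V a p := by
      rw [hV, hV, hV, hv]
      simp only [inner_sub_right]
      ring
    rw [h3pt] at hVI
    have hbd : γ i * ⟪g, a - p⟫ ≤ γ i ^ 2 * G ^ 2 / 2 + V a p := by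
      have h1 : ⟪g, a - p⟫ ≤ G * nrm (a - p) :=
        le_trans (hdual g (a - p))
          (mul_le_mul_of_nonneg_right (hGbound i hi a haX) (hnrm0 _))
      have h2 : (nrm (p - a)) ^ 2 / 2 ≤ V a p := hVlb a haX p hpX
      have h4 : nrm (a - p) = nrm (p - a) := by
        have := hnrm_homog (-1) (p - a)
        simpa [neg_sub] using this
      rw [h4] at h1
      have hγp := hγpos i
      nlinarith [sq_nonneg (γ i * G - nrm (p - a)), hnrm0 (p - a),
        mul_le_mul_of_nonneg_left h1 (le_of_lt hγp)]
    have hsplit : γ i * ⟪g, a - x⟫ = γ i * ⟪g, a - p⟫ - γ i * ⟪g, v⟫ := by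
      rw [hv]
      simp only [inner_sub_right]
      ring
    rw [hsplit]
    linarith
  -- per-step inequality with coefficients
  have step : ∀ x ∈ X, ∀ i < T,
      ((i : ℝ) + 1) * (⟪gradf i (xs i), xs i - x⟫ - α * V (xs i) x) ≤
        (α * (i : ℝ) * ((i : ℝ) + 1) / 2 * V (xs i) x -
          α * ((i : ℝ) + 1) * ((i : ℝ) + 2) / 2 * V (xs (i + 1)) x) + G ^ 2 / α := by
    intro x hx i hi
    have hk := key x hx i hi
    have ht := htel x hx i hi
    have hγp := hγpos i
    have h1 : ⟪gradf i (xs i), xs i - x⟫ ≤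
        1 / γ i * V (xs i) x - 1 / γ i * V (xs (i + 1)) x + γ i * G ^ 2 / 2 := by
      have hee : γ i * (1 / γ i * V (xs i) x - 1 / γ i * V (xs (i + 1)) x + γ i * G ^ 2 / 2)
          = V (xs i) x - V (xs (i + 1)) x + γ i ^ 2 * G ^ 2 / 2 := by
        field_simp
      exact (mul_le_mul_iff_right₀ hγp).mp (by rw [hee]; exact hk)
    have hnoise : ((i : ℝ) + 1) * γ i * G ^ 2 / 2 ≤ G ^ 2 / α := by
      rw [hγ]
      have hi2 : (0:ℝ) < (i : ℝ) + 2 := by positivity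
      have heq : ((i : ℝ) + 1) * (2 / (α * ((i : ℝ) + 2))) * G ^ 2 / 2
          = (((i : ℝ) + 1) / ((i : ℝ) + 2)) * (G ^ 2 / α) := by
        field_simp
      rw [heq]
      have hle1 : ((i : ℝ) + 1) / ((i : ℝ) + 2) ≤ 1 := by
        rw [div_le_one hi2]; linarith
      calc (((i : ℝ) + 1) / ((i : ℝ) + 2)) * (G ^ 2 / α) ≤ 1 * (G ^ 2 / α) :=
            mul_le_mul_of_nonneg_right hle1 (by positivity)
        _ = G ^ 2 / α := one_mul _
    calc ((i : ℝ) + 1) * (⟪gradf i (xs i), xs i - x⟫ - α * V (xs i) x)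
        ≤ ((i : ℝ) + 1) * ((1 / γ i * V (xs i) x - 1 / γ i * V (xs (i + 1)) x
            + γ i * G ^ 2 / 2) - α * V (xs i) x) := by
          apply mul_le_mul_of_nonneg_left _ (by positivity)
          linarith
      _ = ((i : ℝ) + 1) * (1 / γ i * V (xs i) x - 1 / γ i * V (xs (i + 1)) x
            - α * V (xs i) x) + ((i : ℝ) + 1) * γ i * G ^ 2 / 2 := by ring
      _ = (α * (i : ℝ) * ((i : ℝ) + 1) / 2 * V (xs i) x -
            α * ((i : ℝ) + 1) * ((i : ℝ) + 2) / 2 * V (xs (i + 1)) x)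
            + ((i : ℝ) + 1) * γ i * G ^ 2 / 2 := by rw [ht]
      _ ≤ (α * (i : ℝ) * ((i : ℝ) + 1) / 2 * V (xs i) x -
            α * ((i : ℝ) + 1) * ((i : ℝ) + 2) / 2 * V (xs (i + 1)) x) + G ^ 2 / α := by
          linarith
  refine ⟨?_, htel⟩
  intro x hx
  have hsum : ∑ i ∈ Finset.range T,
      ((i : ℝ) + 1) * (⟪gradf i (xs i), xs i - x⟫ - α * V (xs i) x) ≤
      ∑ i ∈ Finset.range T,
        ((α * (i : ℝ) * ((i : ℝ) + 1) / 2 * V (xs i) x -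
          α * ((i : ℝ) + 1) * ((i : ℝ) + 2) / 2 * V (xs (i + 1)) x) + G ^ 2 / α) :=
    Finset.sum_le_sum (fun i hi => step x hx i (Finset.mem_range.mp hi))
  have htele : ∑ i ∈ Finset.range T,
      (α * (i : ℝ) * ((i : ℝ) + 1) / 2 * V (xs i) x -
        α * ((i : ℝ) + 1) * ((i : ℝ) + 2) / 2 * V (xs (i + 1)) x) =
      -(α * (T : ℝ) * ((T : ℝ) + 1) / 2 * V (xs T) x) := by
    calc ∑ i ∈ Finset.range T,
        (α * (i : ℝ) * ((i : ℝ) + 1) / 2 * V (xs i) x -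
          α * ((i : ℝ) + 1) * ((i : ℝ) + 2) / 2 * V (xs (i + 1)) x)
        = ∑ i ∈ Finset.range T,
          ((fun j : ℕ => α * (j : ℝ) * ((j : ℝ) + 1) / 2 * V (xs j) x) i -
            (fun j : ℕ => α * (j : ℝ) * ((j : ℝ) + 1) / 2 * V (xs j) x) (i + 1)) := by
          apply Finset.sum_congr rfl
          intro i _
          simp only []
          push_cast
          ring
      _ = (fun j : ℕ => α * (j : ℝ) * ((j : ℝ) + 1) / 2 * V (xs j) x) 0 -
            (fun j : ℕ => α * (j : ℝ) * ((j : ℝ) + 1) / 2 * V (xs j) x) T :=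
          Finset.sum_range_sub' _ T
      _ = -(α * (T : ℝ) * ((T : ℝ) + 1) / 2 * V (xs T) x) := by
          simp only []
          push_cast
          ring
  have hVT : 0 ≤ V (xs T) x := hVnn (xs T) (memX T le_rfl) x hx
  calc ∑ i ∈ Finset.range T,
        ((i : ℝ) + 1) * (⟪gradf i (xs i), xs i - x⟫ - α * V (xs i) x)
      ≤ ∑ i ∈ Finset.range T,
        ((α * (i : ℝ) * ((i : ℝ) + 1) / 2 * V (xs i) x -
          α * ((i : ℝ) + 1) * ((i : ℝ) + 2) / 2 * V (xs (i + 1)) x) + G ^ 2 / α) := hsum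
    _ = -(α * (T : ℝ) * ((T : ℝ) + 1) / 2 * V (xs T) x) + (T : ℝ) * (G ^ 2 / α) := by
        rw [Finset.sum_add_distrib, htele, Finset.sum_const, Finset.card_range]
        simp [nsmul_eq_mul]
    _ ≤ G ^ 2 * T / α := by
        have hb : 0 ≤ α * (T : ℝ) * ((T : ℝ) + 1) / 2 * V (xs T) x := by positivity
        have heq : (T : ℝ) * (G ^ 2 / α) = G ^ 2 * T / α := by ring
        linarith
end

section
/- Let f_1,...,f_T be convex functions on X whose gradients are L-Lipschitz: ‖∇f_t(x) - ∇f_t(v)‖_* ≤ L‖x - v‖ for all x, v ∈ X. Running Mirror Prox with η_t = θ_t ∇f_t(v_t), ξ_t = θ_t ∇f_t(x_t) (where x_t = Prox_{v_t}(γ_t η_t), v_{t+1} = Prox_{v_t}(γ_t ξ_t)), and step sizes γ_t = 1/(L sup_{s∈[T]} θ_s), the weighted regret satisfies ∑_{t=1}^T θ_t f_t(x_t) - inf_{x∈X} ∑_{t=1}^T θ_t f_t(x) ≤ Ω L sup_{t∈[T]} θ_t. -/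
open scoped RealInnerProductSpace BigOperators

section MPHelpers

open scoped Topology
open Set Filter InnerProductSpace

variable {F : Type*} [NormedAddCommGroup F] [InnerProductSpace ℝ F] [CompleteSpace F]

lemma mp_grad_ineq {X : Set F} {f : F → ℝ} {x y g : F}
    (hf : ConvexOn ℝ X f) (hx : x ∈ X) (hy : y ∈ X)
    (hg : HasGradientAt f g x) : ⟪g, y - x⟫ ≤ f y - f x := by
  set φ : ℝ → ℝ := fun s => f (x + s • (y - x)) with hφ
  have hc : HasDerivAt (fun s : ℝ => x + s • (y - x)) (y - x) 0 := by
    simpa using ((hasDerivAt_id (0:ℝ)).smul_const (y - x)).const_add x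
  have hder : HasDerivAt φ ⟪g, y - x⟫ 0 := by
    have h0 : HasFDerivAt f (toDual ℝ F g) (x + (0:ℝ) • (y - x)) := by
      simpa using hg.hasFDerivAt
    simpa [toDual_apply_apply, hφ, Function.comp_def] using h0.comp_hasDerivAt 0 hc
  have hT : Tendsto (slope φ 0) (𝓝[>] (0:ℝ)) (𝓝 ⟪g, y - x⟫) :=
    (hasDerivAt_iff_tendsto_slope.mp hder).mono_left
      (nhdsWithin_mono 0 fun s hs => ne_of_gt hs)
  refine le_of_tendsto hT ?_
  filter_upwards [Ioc_mem_nhdsGT zero_lt_one] with s hs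
  have hs0 : (0:ℝ) < s := hs.1
  have hmem := hf.2 hx hy (by linarith [hs.2] : (0:ℝ) ≤ 1 - s) hs0.le (by ring)
  have hpt : (1 - s) • x + s • y = x + s • (y - x) := by
    rw [sub_smul, one_smul, smul_sub]; abel
  rw [hpt] at hmem
  have hφ0 : φ 0 = f x := by simp [hφ]
  have hsl : slope φ 0 s = (φ s - f x) / s := by rw [slope_def_field, hφ0, sub_zero]
  rw [hsl, div_le_iff₀ hs0]
  have : φ s ≤ (1 - s) * f x + s * f y := hmem
  nlinarith

lemma mp_breg_lower {X : Set F} (hX : Convex ℝ X) {ω : F → ℝ} {gradω : F → F}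
    (nrm : F → ℝ)
    (hnrm_homog : ∀ (c : ℝ) (a : F), nrm (c • a) = |c| * nrm a)
    (hdiff : ∀ z ∈ X, HasGradientAt ω (gradω z) z)
    (hstrong : ∀ z' ∈ X, ∀ z'' ∈ X, ⟪gradω z' - gradω z'', z' - z''⟫ ≥ (nrm (z' - z'')) ^ 2)
    {u z : F} (hu : u ∈ X) (hz : z ∈ X) :
    (nrm (z - u)) ^ 2 / 2 ≤ ω z - ω u - ⟪gradω u, z - u⟫ := by
  set c : ℝ → F := fun s => u + s • (z - u) with hcdef
  have hcX : ∀ s ∈ Icc (0:ℝ) 1, c s ∈ X := fun s hs => hX.add_smul_sub_mem hu hz hs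
  set ψ : ℝ → ℝ := fun s =>
    ω (c s) - s * ⟪gradω u, z - u⟫ - s ^ 2 * ((nrm (z - u)) ^ 2 / 2) with hψdef
  have hder : ∀ s ∈ Icc (0:ℝ) 1,
      HasDerivAt ψ (⟪gradω (c s), z - u⟫ - ⟪gradω u, z - u⟫ - s * (nrm (z - u)) ^ 2) s := by
    intro s hs
    have hcs : HasDerivAt c (z - u) s := by
      simpa [hcdef] using ((hasDerivAt_id s).smul_const (z - u)).const_add u
    have h1 : HasDerivAt (fun t => ω (c t)) ⟪gradω (c s), z - u⟫ s := by
      simpa [toDual_apply_apply, Function.comp_def] using ((hdiff (c s) (hcX s hs)).hasFDerivAt.comp_hasDerivAt s hcs)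
    have h2 : HasDerivAt (fun t : ℝ => t * ⟪gradω u, z - u⟫) ⟪gradω u, z - u⟫ s := by
      simpa using (hasDerivAt_id s).mul_const ⟪gradω u, z - u⟫
    have h3 : HasDerivAt (fun t : ℝ => t ^ 2 * ((nrm (z - u)) ^ 2 / 2))
        (s * (nrm (z - u)) ^ 2) s := by
      have := (hasDerivAt_pow 2 s).mul_const ((nrm (z - u)) ^ 2 / 2)
      refine this.congr_deriv ?_
      rw [show (2:ℕ) - 1 = 1 from rfl]; push_cast; ring
    exact (h1.sub h2).sub h3
  have hmono : MonotoneOn ψ (Icc 0 1) := by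
    apply monotoneOn_of_deriv_nonneg (convex_Icc 0 1)
    · intro s hs
      exact (hder s hs).continuousAt.continuousWithinAt
    · intro s hs
      rw [interior_Icc] at hs
      exact (hder s (Ioo_subset_Icc_self hs)).differentiableAt.differentiableWithinAt
    · intro s hs
      rw [interior_Icc] at hs
      rw [(hder s (Ioo_subset_Icc_self hs)).deriv]
      have hst := hstrong (c s) (hcX s (Ioo_subset_Icc_self hs)) u hu
      have hcu : c s - u = s • (z - u) := by simp [hcdef]
      rw [hcu, real_inner_smul_right, hnrm_homog, abs_of_pos hs.1] at hst
      have hexp : ⟪gradω (c s) - gradω u, z - u⟫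
          = ⟪gradω (c s), z - u⟫ - ⟪gradω u, z - u⟫ := inner_sub_left _ _ _
      nlinarith [hs.1, hst, hexp]
  have h01 := hmono (left_mem_Icc.mpr zero_le_one) (right_mem_Icc.mpr zero_le_one) zero_le_one
  have hc0 : c 0 = u := by simp [hcdef]
  have hc1 : c 1 = z := by simp [hcdef]
  simp only [hψdef, hc0, hc1, one_pow, one_mul, zero_pow, zero_mul, sub_zero, pow_two] at h01
  nlinarith [h01]

lemma mp_prox_vi {X : Set F} (hX : Convex ℝ X) {ω : F → ℝ} {gradω : F → F}
    {V : F → F → ℝ} (hV : ∀ z z', V z z' = ω z' - ω z - ⟪gradω z, z' - z⟫)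
    (hdiff : ∀ z ∈ X, HasGradientAt ω (gradω z) z)
    (a b : ℝ) (w v : F) {u : F} (hu : u ∈ X)
    (hmin : IsMinOn (fun z => a * (b * ⟪w, z⟫) + V v z) X u)
    {x : F} (hx : x ∈ X) :
    0 ≤ a * (b * ⟪w, x - u⟫) + ⟪gradω u - gradω v, x - u⟫ := by
  have h1 : HasFDerivAt (fun z : F => a * (b * ⟪w, z⟫)) ((a * b) • (innerSL ℝ w)) u := by
    have := ((innerSL ℝ w).hasFDerivAt (x := u)).const_mul (a * b)
    simpa [mul_assoc] using this
  have h4 : HasFDerivAt (fun z : F => ⟪gradω v, z - v⟫) (innerSL ℝ (gradω v) : F →L[ℝ] ℝ) u := by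
    have h5 := (innerSL ℝ (gradω v)).hasFDerivAt (x := u)
    have := h5.sub_const ⟪gradω v, v⟫
    simpa [inner_sub_right] using this
  have h2 : HasFDerivAt (fun z => V v z)
      (toDual ℝ F (gradω u) - innerSL ℝ (gradω v)) u := by
    have h3 : HasFDerivAt (fun z : F => ω z - ω v - ⟪gradω v, z - v⟫)
        (toDual ℝ F (gradω u) - innerSL ℝ (gradω v)) u :=
      (((hdiff u hu).hasFDerivAt).sub_const (ω v)).sub h4
    have heq : (fun z => V v z) = fun z : F => ω z - ω v - ⟪gradω v, z - v⟫ :=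
      funext fun z => hV v z
    rw [heq]; exact h3
  have hD := h1.add h2
  have hvi := hmin.localize.hasFDerivWithinAt_nonneg hD.hasFDerivWithinAt
    (sub_mem_posTangentConeAt_of_segment_subset (hX.segment_subset hu hx))
  simp only [ContinuousLinearMap.add_apply, ContinuousLinearMap.coe_smul',
    Pi.smul_apply, ContinuousLinearMap.sub_apply, innerSL_apply_apply, toDual_apply_apply,
    smul_eq_mul, inner_sub_left] at hvi
  rw [inner_sub_left]
  linarith [hvi]

end MPHelpers

set_option maxHeartbeats 1000000 in
/-- Mirror Prox weighted-regret bound for convex losses with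
`L`-Lipschitz gradients: with `η_t = θ_t ∇f_t(v_t)`, `ξ_t = θ_t ∇f_t(x_t)`
(`x_t = Prox_{v_t}(γ_t η_t)`, `v_{t+1} = Prox_{v_t}(γ_t ξ_t)`) and step sizes
`γ_t = 1/(L sup_s θ_s)`, the weighted regret is at most `Ω L sup_t θ_t`.
Index `i ∈ Finset.range T` represents time step `t = i+1`. -/
theorem mirror_prox_smooth_weighted_regret {n T : ℕ} (hT : 0 < T)
    (X : Set (EuclideanSpace ℝ (Fin n))) (hXconv : Convex ℝ X) (hXcomp : IsCompact X)
    (nrm dnrm : EuclideanSpace ℝ (Fin n) → ℝ)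
    (hnrm_homog : ∀ (c : ℝ) (a : EuclideanSpace ℝ (Fin n)), nrm (c • a) = |c| * nrm a)
    (hnrm_tri : ∀ a b : EuclideanSpace ℝ (Fin n), nrm (a + b) ≤ nrm a + nrm b)
    (hdual : ∀ ξ z : EuclideanSpace ℝ (Fin n), ⟪ξ, z⟫ ≤ dnrm ξ * nrm z)
    (ω : EuclideanSpace ℝ (Fin n) → ℝ)
    (gradω : EuclideanSpace ℝ (Fin n) → EuclideanSpace ℝ (Fin n))
    (hdiff : ∀ z ∈ X, HasGradientAt ω (gradω z) z)
    (hstrong : ∀ z' ∈ X, ∀ z'' ∈ X,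
      ⟪gradω z' - gradω z'', z' - z''⟫ ≥ (nrm (z' - z'')) ^ 2)
    (V : EuclideanSpace ℝ (Fin n) → EuclideanSpace ℝ (Fin n) → ℝ)
    (hV : ∀ z z', V z z' = ω z' - ω z - ⟪gradω z, z' - z⟫)
    (f : ℕ → EuclideanSpace ℝ (Fin n) → ℝ)
    (gradf : ℕ → EuclideanSpace ℝ (Fin n) → EuclideanSpace ℝ (Fin n))
    (hfconv : ∀ i < T, ConvexOn ℝ X (f i))
    (hfdiff : ∀ i < T, ∀ x ∈ X, HasGradientAt (f i) (gradf i x) x)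
    (L : ℝ) (hL : 0 < L)
    (hLip : ∀ i < T, ∀ x ∈ X, ∀ v ∈ X, dnrm (gradf i x - gradf i v) ≤ L * nrm (x - v))
    (θ : ℕ → ℝ) (hθnonneg : ∀ i < T, 0 ≤ θ i)
    (hθsum : ∑ i ∈ Finset.range T, θ i = 1)
    (θsup : ℝ) (hθsup : IsGreatest (θ '' {i | i < T}) θsup)
    (Ω : ℝ) (hΩpos : 0 < Ω)
    (γ : ℕ → ℝ) (hγ : ∀ i, γ i = 1 / (L * θsup))
    -- Mirror Prox iterates: v_1 is the ω-center
    (vs xs : ℕ → EuclideanSpace ℝ (Fin n))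
    (hv0 : vs 0 ∈ X) (hv0center : IsMinOn ω X (vs 0))
    (hΩwidth : ∀ z ∈ X, V (vs 0) z ≤ Ω)
    (hxstep : ∀ i < T, xs i ∈ X ∧
      IsMinOn (fun z => γ i * (θ i * ⟪gradf i (vs i), z⟫) + V (vs i) z) X (xs i))
    (hvstep : ∀ i < T, vs (i + 1) ∈ X ∧
      IsMinOn (fun z => γ i * (θ i * ⟪gradf i (xs i), z⟫) + V (vs i) z) X (vs (i + 1))) :
    ∀ x ∈ X,
      ∑ i ∈ Finset.range T, θ i * f i (xs i) - ∑ i ∈ Finset.range T, θ i * f i x ≤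
        Ω * L * θsup := by
  intro x hx
  -- basic facts about nrm
  have hnrm0 : nrm 0 = 0 := by simpa using hnrm_homog 0 0
  have hnrm_neg : ∀ a, nrm (-a) = nrm a := fun a => by simpa using hnrm_homog (-1) a
  have hnrm_nonneg : ∀ a, 0 ≤ nrm a := by
    intro a
    have h := hnrm_tri a (-a)
    rw [add_neg_cancel, hnrm0, hnrm_neg] at h
    linarith
  -- θsup > 0
  have hθle : ∀ i < T, θ i ≤ θsup := fun i hi => hθsup.2 ⟨i, hi, rfl⟩
  have hθsup_pos : 0 < θsup := by
    by_contra h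
    push_neg at h
    have hs : ∑ i ∈ Finset.range T, θ i ≤ 0 := by
      apply Finset.sum_nonpos
      intro i hi
      exact le_trans (hθle i (Finset.mem_range.mp hi)) h
    rw [hθsum] at hs
    linarith
  have hLθ : 0 < L * θsup := mul_pos hL hθsup_pos
  -- membership of the iterates
  have hvsX : ∀ i, i ≤ T → vs i ∈ X := by
    intro i
    induction i with
    | zero => intro _; exact hv0
    | succ k _ => intro hk; exact (hvstep k (by omega)).1
  -- Bregman distance lower bound
  have hVlow : ∀ u ∈ X, ∀ z ∈ X, (nrm (z - u)) ^ 2 / 2 ≤ V u z := by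
    intro u hu z hz
    rw [hV]
    exact mp_breg_lower hXconv nrm hnrm_homog hdiff hstrong hu hz
  -- three-point identity
  have h3pt : ∀ p q r : EuclideanSpace ℝ (Fin n),
      ⟪gradω q - gradω p, r - q⟫ = V p r - V q r - V p q := by
    intro p q r
    simp only [hV, inner_sub_left, inner_sub_right]
    ring
  -- per-step inequality
  have key : ∀ i < T,
      γ i * (θ i * ⟪gradf i (xs i), xs i - x⟫) ≤ V (vs i) x - V (vs (i + 1)) x := by
    intro i hi
    obtain ⟨hxX, hxmin⟩ := hxstep i hi
    obtain ⟨hv'X, hvmin⟩ := hvstep i hi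
    have hvX := hvsX i (le_of_lt hi)
    set u := xs i with hu
    set v := vs i with hv
    set v' := vs (i + 1) with hv'
    set w := gradf i u with hw
    set w' := gradf i v with hw'
    have ha : γ i = 1 / (L * θsup) := hγ i
    have hb0 : 0 ≤ θ i := hθnonneg i hi
    have hab0 : 0 ≤ γ i * θ i := mul_nonneg (by rw [ha]; positivity) hb0
    have habL : γ i * θ i * L ≤ 1 := by
      rw [ha]
      rw [div_mul_eq_mul_div, one_mul, div_mul_eq_mul_div, div_le_one hLθ]
      calc θ i * L ≤ θsup * L := mul_le_mul_of_nonneg_right (hθle i hi) hL.le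
        _ = L * θsup := by ring
    have hvi1 := mp_prox_vi hXconv hV hdiff (γ i) (θ i) w v hv'X hvmin hx
    have hvi2 := mp_prox_vi hXconv hV hdiff (γ i) (θ i) w' v hxX hxmin hv'X
    have e1 : ⟪w, u - x⟫ = ⟪w, u - v'⟫ + ⟪w, v' - x⟫ := by
      rw [← inner_add_right]; congr 1; abel
    have e2 : ⟪w - w', u - v'⟫ = ⟪w, u - v'⟫ - ⟪w', u - v'⟫ := inner_sub_left _ _ _
    have e3 : ⟪w', u - v'⟫ = -⟪w', v' - u⟫ := by
      rw [← inner_neg_right]; congr 1; abel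
    have e4 : ⟪w, x - v'⟫ = -⟪w, v' - x⟫ := by
      rw [← inner_neg_right]; congr 1; abel
    have hcross : γ i * θ i * ⟪w - w', u - v'⟫
        ≤ (nrm (u - v)) ^ 2 / 2 + (nrm (u - v')) ^ 2 / 2 := by
      have h1 : ⟪w - w', u - v'⟫ ≤ dnrm (w - w') * nrm (u - v') := hdual _ _
      have h2 : dnrm (w - w') ≤ L * nrm (u - v) := hLip i hi u hxX v hvX
      have hn1 := hnrm_nonneg (u - v)
      have hn2 := hnrm_nonneg (u - v')
      nlinarith [mul_le_mul_of_nonneg_left h1 hab0,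
        mul_le_mul_of_nonneg_left h2 (mul_nonneg hab0 hn2),
        mul_le_mul_of_nonneg_right habL (mul_nonneg hn1 hn2),
        sq_nonneg (nrm (u - v) - nrm (u - v'))]
    have hsc1 : (nrm (u - v)) ^ 2 / 2 ≤ V v u := by
      have := hVlow v hvX u hxX
      rwa [show u - v = u - v from rfl] at this
    have hsc2 : (nrm (u - v')) ^ 2 / 2 ≤ V u v' := by
      have := hVlow u hxX v' hv'X
      rwa [show v' - u = -(u - v') by abel, hnrm_neg] at this
    have h3a := h3pt v v' x
    have h3b := h3pt v u v'
    rw [h3a, e4] at hvi1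
    rw [h3b] at hvi2
    rw [e2, e3] at hcross
    rw [e1]
    linarith [hvi1, hvi2, hcross, hsc1, hsc2]
  -- summation and telescoping
  have hsum1 : ∑ i ∈ Finset.range T, γ i * (θ i * ⟪gradf i (xs i), xs i - x⟫) ≤ Ω := by
    calc ∑ i ∈ Finset.range T, γ i * (θ i * ⟪gradf i (xs i), xs i - x⟫)
        ≤ ∑ i ∈ Finset.range T, (V (vs i) x - V (vs (i + 1)) x) :=
          Finset.sum_le_sum fun i hi => key i (Finset.mem_range.mp hi)
      _ = V (vs 0) x - V (vs T) x := Finset.sum_range_sub' (fun i => V (vs i) x) T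
      _ ≤ Ω := by
          have h1 := hΩwidth x hx
          have h2 : 0 ≤ V (vs T) x :=
            le_trans (by positivity) (hVlow (vs T) (hvsX T le_rfl) x hx)
          linarith
  have hsum2 : ∑ i ∈ Finset.range T, θ i * ⟪gradf i (xs i), xs i - x⟫ ≤ Ω * L * θsup := by
    have hrw : ∀ i, θ i * ⟪gradf i (xs i), xs i - x⟫
        = (L * θsup) * (γ i * (θ i * ⟪gradf i (xs i), xs i - x⟫)) := by
      intro i
      rw [hγ i]
      field_simp
    calc ∑ i ∈ Finset.range T, θ i * ⟪gradf i (xs i), xs i - x⟫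
        = (L * θsup) * ∑ i ∈ Finset.range T, γ i * (θ i * ⟪gradf i (xs i), xs i - x⟫) := by
          rw [Finset.mul_sum]
          exact Finset.sum_congr rfl fun i _ => hrw i
      _ ≤ (L * θsup) * Ω := mul_le_mul_of_nonneg_left hsum1 hLθ.le
      _ = Ω * L * θsup := by ring
  rw [← Finset.sum_sub_distrib]
  refine le_trans (Finset.sum_le_sum ?_) hsum2
  intro i hi
  have hi' := Finset.mem_range.mp hi
  have hgi := mp_grad_ineq (hfconv i hi') (hxstep i hi').1 hx (hfdiff i hi' (xs i) (hxstep i hi').1)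
  have hneg : ⟪gradf i (xs i), x - xs i⟫ = -⟪gradf i (xs i), xs i - x⟫ := by
    rw [← inner_neg_right]; congr 1; abel
  rw [hneg] at hgi
  have hmul := mul_le_mul_of_nonneg_left
    (show f i (xs i) - f i x ≤ ⟪gradf i (xs i), xs i - x⟫ by linarith) (hθnonneg i hi')
  linarith [hmul]
end
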